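/- Let Ω = (0,∞) with its Borel σ-field, P a probability measure on Ω equivalent to Lebesgue measure, and ξ the identity random variable ξ(ω) = ω. Let K = {(α, β) ∈ ℝ² : 0 ≤ β ≤ √α ≤ 1} and C = {1 − α + (α + β)ξ : (α, β) ∈ K} ⊆ L0+. Then the set of outer support points of C equals C^max \ {1}; that is, for every γ ∈ (0,1] the element g_γ = 1 − γ + (γ + √γ)ξ is an outer support point of C, while the constant 1 is not. -/

import Mathlib

open MeasureTheory Filter Set

noncomputable section

variable {Ω : Type*} [MeasurableSpace Ω]

/-- The nonnegative orthant `L⁰₊` of the space `L⁰` of (a.e.-equivalence classes of)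
random variables over `(Ω, ℱ, P)`. -/
def L0plus (P : Measure Ω) : Set (Ω →ₘ[P] ℝ) := {f | 0 ≤ f}

/-- The metric `(f, g) ↦ E[1 ∧ |f - g|]` inducing the topology of convergence
in probability on `L⁰`. -/
def dist0 (P : Measure Ω) (f g : Ω →ₘ[P] ℝ) : ℝ :=
  ∫ ω, min 1 |f ω - g ω| ∂P

/-- Convergence in probability of a sequence in `L⁰`. -/
def Tendsto0 (P : Measure Ω) (f : ℕ → Ω →ₘ[P] ℝ) (g : Ω →ₘ[P] ℝ) : Prop :=
  Tendsto (fun n => dist0 P (f n) g) atTop (nhds 0)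

/-- Closure of a set in `L⁰` with respect to the topology of convergence in probability. -/
def closure0 (P : Measure Ω) (C : Set (Ω →ₘ[P] ℝ)) : Set (Ω →ₘ[P] ℝ) :=
  {f | ∀ ε : ℝ, 0 < ε → ∃ g ∈ C, dist0 P f g < ε}

/-- A set of `L⁰` is closed iff it contains its closure. -/
def IsClosed0 (P : Measure Ω) (C : Set (Ω →ₘ[P] ℝ)) : Prop :=
  closure0 P C ⊆ C

/-- Boundedness (in probability) of a set `C ⊆ L⁰₊` : `lim_{ℓ → ∞} sup_{f ∈ C} P[f > ℓ] = 0`. -/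
def Bounded0 (P : Measure Ω) (C : Set (Ω →ₘ[P] ℝ)) : Prop :=
  Tendsto (fun ℓ : ℝ => ⨆ f ∈ C, P {ω | ℓ < f ω}) atTop (nhds 0)

/-- The set `C^max` of maximal elements of `C ⊆ L⁰₊` : `f ∈ C` such that `f ≤ g` a.s.
and `g ∈ C` imply `f = g` a.s. -/
def maxSet (P : Measure Ω) (C : Set (Ω →ₘ[P] ℝ)) : Set (Ω →ₘ[P] ℝ) :=
  {f | f ∈ C ∧ ∀ g ∈ C, f ≤ g → f = g}

/-- `C` is max-closed if every maximal element of its closure already belongs to `C`. -/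
def MaxClosed (P : Measure Ω) (C : Set (Ω →ₘ[P] ℝ)) : Prop :=
  maxSet P (closure0 P C) ⊆ C

/-- The pairing `⟨μ, f⟩ = ∫ f dμ ∈ [0, ∞]` between a nonnegative measure `μ` and `f ∈ L⁰₊`. -/
def pairing {P : Measure Ω} (μ : Measure Ω) (f : Ω →ₘ[P] ℝ) : ENNReal :=
  ∫⁻ ω, ENNReal.ofReal (f ω) ∂μ

/-- The set `C^osp` of outer support points of `C ⊆ L⁰₊`: points `g ∈ C^max` for which there
is a σ-finite nonnegative measure `μ ≪ P` with `0 < sup_{f ∈ C} ⟨μ, f⟩ = ⟨μ, g⟩ < ∞`;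
by convention `{0}^osp = {0}`. -/
def osp (P : Measure Ω) (C : Set (Ω →ₘ[P] ℝ)) : Set (Ω →ₘ[P] ℝ) :=
  {g | g ∈ maxSet P C ∧
    (C = {0} ∨ ∃ μ : Measure Ω, μ ≪ P ∧ SigmaFinite μ ∧
      0 < pairing μ g ∧ pairing μ g < ⊤ ∧ (⨆ f ∈ C, pairing μ f) = pairing μ g)}

/-- The solid hull of `C ⊆ L⁰₊`. -/
def solidHull (P : Measure Ω) (C : Set (Ω →ₘ[P] ℝ)) : Set (Ω →ₘ[P] ℝ) :=
  {f | f ∈ L0plus P ∧ ∃ g ∈ C, f ≤ g}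

/-- A set `S ⊆ L⁰₊` is solid if `g ∈ S` and `0 ≤ f ≤ g` imply `f ∈ S`. -/
def Solid (P : Measure Ω) (S : Set (Ω →ₘ[P] ℝ)) : Prop :=
  ∀ g ∈ S, ∀ f : Ω →ₘ[P] ℝ, 0 ≤ f → f ≤ g → f ∈ S

/-- `(g n)` is a sequence of forward convex combinations of `(f n)`. -/
def ForwardConvexComb (P : Measure Ω) (f g : ℕ → Ω →ₘ[P] ℝ) : Prop :=
  ∀ n : ℕ, g n ∈ convexHull ℝ (f '' Set.Ici n)

end

noncomputable section

/-- The sample space `Ω = (0, ∞)` with its Borel σ-field. -/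
abbrev OmegaInf : Type := Set.Ioi (0:ℝ)

/-- Lebesgue measure on `(0, ∞)`. -/
noncomputable def LebInf : Measure OmegaInf :=
  (volume : Measure ℝ).comap Subtype.val

/-- The identity random variable `ξ(ω) = ω`, as an element of `L⁰`. -/
noncomputable def xi (P : Measure OmegaInf) : OmegaInf →ₘ[P] ℝ :=
  AEEqFun.mk (fun ω => (ω : ℝ)) measurable_subtype_coe.aestronglyMeasurable

/-- `K = {(α, β) ∈ ℝ² : 0 ≤ β ≤ √α ≤ 1}` (with `α ≥ 0`). -/
def Kset : Set (ℝ × ℝ) :=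
  {p | 0 ≤ p.1 ∧ 0 ≤ p.2 ∧ p.2 ≤ Real.sqrt p.1 ∧ Real.sqrt p.1 ≤ 1}

/-- The random variable `1 - α + (α + β) ξ`, as an element of `L⁰`. -/
noncomputable def elt (P : Measure OmegaInf) (a b : ℝ) : OmegaInf →ₘ[P] ℝ :=
  AEEqFun.const OmegaInf (1 - a) + (a + b) • xi P

/-- The set `C = {1 - α + (α + β) ξ : (α, β) ∈ K} ⊆ L⁰₊`. -/
noncomputable def Cex (P : Measure OmegaInf) : Set (OmegaInf →ₘ[P] ℝ) :=
  {h | ∃ p ∈ Kset, h = elt P p.1 p.2}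

/-- The constant random variable `1`, as an element of `L⁰`. -/
noncomputable def oneL (P : Measure OmegaInf) : OmegaInf →ₘ[P] ℝ :=
  AEEqFun.const OmegaInf (1 : ℝ)

end

section AuxProof

open Real MeasureTheory

lemma lebInf_apply (s : Set OmegaInf) :
    LebInf s = volume ((Subtype.val : OmegaInf → ℝ) '' s) := by
  unfold LebInf
  exact (MeasurableEmbedding.subtype_coe measurableSet_Ioi).comap_apply volume s

/-- an affine function a.e.-nonnegative w.r.t. Lebesgue on `(0,∞)` is nonneg everywhere. -/
lemma affine_nonneg_of_ae (d t : ℝ) (h : ∀ᵐ (ω : OmegaInf) ∂LebInf, 0 ≤ d + t * (ω : ℝ)) :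
    ∀ x : ℝ, 0 < x → 0 ≤ d + t * x := by
  by_contra hcon
  push_neg at hcon
  obtain ⟨x, hx, hneg⟩ := hcon
  -- find an interval (a,b) ⊆ (0,∞) where the affine map is negative
  obtain ⟨a, b, ha, hab, hI⟩ :
      ∃ a b : ℝ, 0 < a ∧ a < b ∧ ∀ y ∈ Set.Ioo a b, d + t * y < 0 := by
    rcases le_or_gt t 0 with ht | ht
    · refine ⟨x, x + 1, hx, by linarith, fun y hy => ?_⟩
      have : t * y ≤ t * x := by nlinarith [hy.1]
      linarith
    · refine ⟨x / 2, x, by linarith, by linarith, fun y hy => ?_⟩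
      have : t * y ≤ t * x := by nlinarith [hy.2]
      linarith
  have hnull : LebInf {ω : OmegaInf | ¬ 0 ≤ d + t * (ω : ℝ)} = 0 := by
    exact h
  have hsub : (Subtype.val ⁻¹' Set.Ioo a b : Set OmegaInf) ⊆
      {ω : OmegaInf | ¬ 0 ≤ d + t * (ω : ℝ)} := by
    intro ω hω
    exact not_le.mpr (hI _ hω)
  have h0 : LebInf (Subtype.val ⁻¹' Set.Ioo a b : Set OmegaInf) = 0 :=
    le_antisymm (hnull ▸ measure_mono hsub) (by simp)
  rw [lebInf_apply, Subtype.image_preimage_coe] at h0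
  have himg : Set.Ioi (0:ℝ) ∩ Set.Ioo a b = Set.Ioo a b := by
    apply Set.inter_eq_self_of_subset_right
    intro y hy
    exact lt_trans ha hy.1
  rw [himg, Real.volume_Ioo] at h0
  have : b - a ≤ 0 := by
    by_contra hba
    push_neg at hba
    rw [ENNReal.ofReal_eq_zero] at h0
    linarith
  linarith

lemma affine_coeffs (d t : ℝ) (h : ∀ x : ℝ, 0 < x → 0 ≤ d + t * x) : 0 ≤ d ∧ 0 ≤ t := by
  have h1 := h 1 one_pos
  constructor
  · by_contra hd
    push_neg at hd
    rcases le_or_gt t 0 with ht | ht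
    · nlinarith
    · have ht0 : (2 : ℝ) * t ≠ 0 := by positivity
      have h2 := h (-d / (2 * t)) (div_pos (by linarith) (by linarith))
      have h5 : -d / (2 * t) * (2 * t) = -d := div_mul_cancel₀ _ ht0
      have h3 : t * (-d / (2 * t)) = -d / 2 := by linear_combination h5 / 2
      rw [h3] at h2
      linarith
  · by_contra ht
    push_neg at ht
    have ht0 : (-t : ℝ) ≠ 0 := by intro hh; rw [neg_eq_zero] at hh; exact absurd hh (ne_of_lt ht)
    have hd1 : 0 < d + 1 := by nlinarith
    have h2 := h ((d + 1) / (-t)) (div_pos hd1 (by linarith))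
    have h5 : (d + 1) / -t * -t = d + 1 := div_mul_cancel₀ _ ht0
    have h3 : t * ((d + 1) / (-t)) = -(d + 1) := by linear_combination -h5
    rw [h3] at h2
    linarith

lemma elt_coeFn (P : Measure OmegaInf) (a b : ℝ) :
    (elt P a b : OmegaInf → ℝ) =ᵐ[P] fun ω => (1 - a) + (a + b) * (ω : ℝ) := by
  unfold elt xi
  filter_upwards [AEEqFun.coeFn_add (AEEqFun.const OmegaInf (1 - a))
      ((a + b) • AEEqFun.mk (fun ω : OmegaInf => (ω : ℝ))
        measurable_subtype_coe.aestronglyMeasurable),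
    AEEqFun.coeFn_smul (a + b)
      (AEEqFun.mk (fun ω : OmegaInf => (ω : ℝ)) measurable_subtype_coe.aestronglyMeasurable),
    AEEqFun.coeFn_const (α := OmegaInf) (μ := P) (1 - a : ℝ),
    AEEqFun.coeFn_mk (μ := P) (fun ω : OmegaInf => (ω : ℝ))
      measurable_subtype_coe.aestronglyMeasurable] with ω h1 h2 h3 h4
  rw [h1]
  simp only [Pi.add_apply, h2, Pi.smul_apply, smul_eq_mul, h3, h4, Function.const_apply]

lemma elt_le_iff (P : Measure OmegaInf) [IsProbabilityMeasure P]
    (hPL : P ≪ LebInf) (hLP : LebInf ≪ P) (a b a' b' : ℝ) :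
    elt P a b ≤ elt P a' b' ↔ (a' ≤ a ∧ a + b ≤ a' + b') := by
  constructor
  · intro h
    have hae : ∀ᵐ (ω : OmegaInf) ∂P, (1 - a) + (a + b) * (ω : ℝ) ≤ (1 - a') + (a' + b') * (ω : ℝ) := by
      filter_upwards [elt_coeFn P a b, elt_coeFn P a' b', AEEqFun.coeFn_le.mpr h]
        with ω h1 h2 h3
      rw [← h1, ← h2]; exact h3
    have hleb : ∀ᵐ (ω : OmegaInf) ∂LebInf, 0 ≤ ((1 - a') - (1 - a)) + ((a' + b') - (a + b)) * (ω : ℝ) := by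
      filter_upwards [hLP.ae_le hae] with ω hω
      linarith
    obtain ⟨hd, ht⟩ := affine_coeffs _ _ (affine_nonneg_of_ae _ _ hleb)
    constructor <;> linarith
  · rintro ⟨h1, h2⟩
    rw [← AEEqFun.coeFn_le]
    filter_upwards [elt_coeFn P a b, elt_coeFn P a' b'] with ω hω1 hω2
    rw [hω1, hω2]
    have hω : (0:ℝ) ≤ (ω : ℝ) := le_of_lt ω.2
    nlinarith [mul_le_mul_of_nonneg_right h2 hω]

lemma elt_inj (P : Measure OmegaInf) [IsProbabilityMeasure P]
    (hPL : P ≪ LebInf) (hLP : LebInf ≪ P) {a b a' b' : ℝ}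
    (h : elt P a b = elt P a' b') : a = a' ∧ b = b' := by
  have h1 := (elt_le_iff P hPL hLP a b a' b').mp h.le
  have h2 := (elt_le_iff P hPL hLP a' b' a b).mp h.ge
  constructor <;> linarith [h1.1, h1.2, h2.1, h2.2]

lemma oneL_eq_elt (P : Measure OmegaInf) : oneL P = elt P 0 0 := by
  simp [oneL, elt]

lemma pairing_elt (P : Measure OmegaInf) (μ : Measure OmegaInf) (hμP : μ ≪ P)
    (a b : ℝ) (ha : a ≤ 1) (hab : 0 ≤ a + b) :
    pairing μ (elt P a b) = ENNReal.ofReal (1 - a) * μ Set.univ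
      + ENNReal.ofReal (a + b) * ∫⁻ ω, ENNReal.ofReal (ω : ℝ) ∂μ := by
  unfold pairing
  have h1 : (fun ω => ENNReal.ofReal (elt P a b ω)) =ᵐ[μ]
      fun ω => ENNReal.ofReal (1 - a) + ENNReal.ofReal (a + b) * ENNReal.ofReal (ω : ℝ) := by
    filter_upwards [(elt_coeFn P a b).filter_mono hμP.ae_le] with ω hω
    rw [hω, ENNReal.ofReal_add (by linarith) (mul_nonneg hab (le_of_lt ω.2)),
      ENNReal.ofReal_mul hab]
  rw [lintegral_congr_ae h1,
    lintegral_add_left measurable_const,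
    lintegral_const,
    lintegral_const_mul _ measurable_subtype_coe.ennreal_ofReal]

end AuxProof

section AuxProof2

open Real MeasureTheory

/-- the measure with density `1_{(0,c]}` w.r.t. Lebesgue on `(0,∞)`. -/
noncomputable def muM (c : ℝ) : Measure OmegaInf :=
  LebInf.withDensity (Set.indicator ((Subtype.val : OmegaInf → ℝ) ⁻¹' Set.Iic c)
    (1 : OmegaInf → ENNReal))

lemma measurable_iic_pre (c : ℝ) :
    MeasurableSet ((Subtype.val : OmegaInf → ℝ) ⁻¹' Set.Iic c) :=
  measurable_subtype_coe measurableSet_Iic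

lemma muM_univ (c : ℝ) (hc : 0 ≤ c) : muM c Set.univ = ENNReal.ofReal c := by
  rw [muM, withDensity_apply _ MeasurableSet.univ, Measure.restrict_univ,
    lintegral_indicator_one (measurable_iic_pre c), lebInf_apply,
    Subtype.image_preimage_coe]
  have : Set.Ioi (0:ℝ) ∩ Set.Iic c = Set.Ioc 0 c := Set.Ioi_inter_Iic
  rw [this, Real.volume_Ioc]
  norm_num

lemma muM_S (c : ℝ) (hc : 0 ≤ c) :
    ∫⁻ (ω : OmegaInf), ENNReal.ofReal (ω : ℝ) ∂(muM c) = ENNReal.ofReal (c ^ 2 / 2) := by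
  rw [muM, lintegral_withDensity_eq_lintegral_mul _
    (measurable_one.indicator (measurable_iic_pre c))
    measurable_subtype_coe.ennreal_ofReal]
  have heq : (fun ω : OmegaInf =>
      (Set.indicator ((Subtype.val : OmegaInf → ℝ) ⁻¹' Set.Iic c)
        (1 : OmegaInf → ENNReal) * fun ω : OmegaInf => ENNReal.ofReal (ω : ℝ)) ω)
      = fun ω : OmegaInf =>
        Set.indicator (Set.Iic c) (fun x => ENNReal.ofReal x) (ω : ℝ) := by
    funext ω
    by_cases hω : (ω : ℝ) ∈ Set.Iic c
    · simp [Set.indicator_of_mem, hω, Set.indicator_of_mem (show ω ∈ (Subtype.val ⁻¹' Set.Iic c) from hω)]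
    · simp [Set.indicator_of_notMem, hω, Set.indicator_of_notMem (show ω ∉ (Subtype.val ⁻¹' Set.Iic c) from hω)]
  rw [heq]
  have h2 : ∫⁻ (ω : OmegaInf), Set.indicator (Set.Iic c) (fun x => ENNReal.ofReal x) (ω : ℝ)
      ∂LebInf = ∫⁻ x in Set.Ioi (0:ℝ), Set.indicator (Set.Iic c) (fun x => ENNReal.ofReal x) x
      ∂volume := by
    rw [LebInf]
    exact lintegral_subtype_comap measurableSet_Ioi _
  rw [h2, lintegral_indicator measurableSet_Iic, Measure.restrict_restrict measurableSet_Iic]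
  have h3 : Set.Iic c ∩ Set.Ioi 0 = Set.Ioc 0 c := by
    rw [Set.inter_comm]; exact Set.Ioi_inter_Iic
  rw [h3]
  rw [← ofReal_integral_eq_lintegral_ofReal]
  · congr 1
    have : ∫ x in Set.Ioc (0:ℝ) c, x = ∫ x in (0:ℝ)..c, x := by
      rw [intervalIntegral.integral_of_le hc]
    rw [this, integral_id]
    ring
  · exact (continuous_id.integrableOn_Ioc)
  · filter_upwards [self_mem_ae_restrict measurableSet_Ioc] with x hx
    exact le_of_lt hx.1

end AuxProof2

section AuxProof3

open Real MeasureTheory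

lemma key_ineq (γ a b : ℝ) (hγ0 : 0 < γ) (hγ1 : γ ≤ 1) (ha : 0 ≤ a) (hb : 0 ≤ b)
    (hba : b ≤ Real.sqrt a) (ha1 : Real.sqrt a ≤ 1) :
    (1 - a) * (4 * Real.sqrt γ / (2 * Real.sqrt γ + 1))
      + (a + b) * ((4 * Real.sqrt γ / (2 * Real.sqrt γ + 1)) ^ 2 / 2)
    ≤ (1 - γ) * (4 * Real.sqrt γ / (2 * Real.sqrt γ + 1))
      + (γ + Real.sqrt γ) * ((4 * Real.sqrt γ / (2 * Real.sqrt γ + 1)) ^ 2 / 2) := by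
  set sg := Real.sqrt γ with hsg
  set sa := Real.sqrt a with hsa
  have hsg0 : 0 < sg := Real.sqrt_pos.mpr hγ0
  have hsa0 : 0 ≤ sa := Real.sqrt_nonneg a
  have hsa2 : sa ^ 2 = a := Real.sq_sqrt ha
  have hsg2 : sg ^ 2 = γ := Real.sq_sqrt hγ0.le
  have hden : (0:ℝ) < 2 * sg + 1 := by linarith
  set c : ℝ := 4 * sg / (2 * sg + 1) with hc
  have hcpos : 0 < c := div_pos (by linarith) hden
  have hkey : 2 * sg * b ≤ a + γ := by
    nlinarith [sq_nonneg (sa - sg), mul_le_mul_of_nonneg_left hba (by linarith : (0:ℝ) ≤ 2 * sg)]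
  have hne : (2 * sg + 1 : ℝ) ≠ 0 := ne_of_gt hden
  have hdiff : (1 - sg ^ 2) * c + (sg ^ 2 + sg) * (c ^ 2 / 2)
      - ((1 - a) * c + (a + b) * (c ^ 2 / 2))
      = c * ((a + sg ^ 2 - 2 * sg * b) / (2 * sg + 1)) := by
    rw [hc]; field_simp; ring
  rw [hsg2] at hdiff
  have hpos : 0 ≤ c * ((a + γ - 2 * sg * b) / (2 * sg + 1)) :=
    mul_nonneg hcpos.le (div_nonneg (by linarith) hden.le)
  linarith

end AuxProof3

section AuxProof4

open Real MeasureTheory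

lemma part2_lemma (P : Measure OmegaInf) [IsProbabilityMeasure P]
    (hPL : P ≪ LebInf) (hLP : LebInf ≪ P) :
    ∀ γ ∈ Set.Ioc (0:ℝ) 1, elt P γ (Real.sqrt γ) ∈ osp P (Cex P) := by
  rintro γ ⟨hγ0, hγ1⟩
  set sg := Real.sqrt γ with hsg
  have hsg0 : 0 < sg := Real.sqrt_pos.mpr hγ0
  have hsg2 : sg ^ 2 = γ := Real.sq_sqrt hγ0.le
  have hden : (0:ℝ) < 2 * sg + 1 := by linarith
  set c : ℝ := 4 * sg / (2 * sg + 1) with hc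
  have hcpos : 0 < c := div_pos (by linarith) hden
  have hKγ : ((γ, sg) : ℝ × ℝ) ∈ Kset :=
    ⟨hγ0.le, Real.sqrt_nonneg _, le_refl _, Real.sqrt_le_one.mpr hγ1⟩
  have hgC : elt P γ sg ∈ Cex P := ⟨(γ, sg), hKγ, rfl⟩
  set μ := muM c with hμ
  have hμP : μ ≪ P := (withDensity_absolutelyContinuous _ _).trans hLP
  have hM := muM_univ c hcpos.le
  have hS := muM_S c hcpos.le
  have pairing_val : ∀ a b : ℝ, a ≤ 1 → 0 ≤ a + b →
      pairing μ (elt P a b) = ENNReal.ofReal ((1 - a) * c + (a + b) * (c ^ 2 / 2)) := by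
    intro a b ha hab
    rw [pairing_elt P μ hμP a b ha hab, hμ, hM, hS,
      ← ENNReal.ofReal_mul (by linarith : (0:ℝ) ≤ 1 - a), ← ENNReal.ofReal_mul hab,
      ← ENNReal.ofReal_add (mul_nonneg (by linarith) hcpos.le)
        (mul_nonneg hab (by positivity))]
  refine ⟨⟨hgC, ?_⟩, Or.inr ⟨μ, hμP, ?_, ?_, ?_, ?_⟩⟩
  · -- maximality
    rintro g ⟨p, hp, rfl⟩ hle
    obtain ⟨hp1, hp2, hp3, hp4⟩ := hp
    rw [elt_le_iff P hPL hLP] at hle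
    have hsab : Real.sqrt p.1 ≤ sg := Real.sqrt_le_sqrt hle.1
    have h1 : p.1 = γ := le_antisymm hle.1 (by linarith [hle.2, hp3, hsab])
    have h2 : p.2 = sg := by
      rw [h1] at hp3
      have : sg ≤ p.2 := by have := hle.2; rw [h1] at this; linarith
      exact le_antisymm hp3 this
    rw [h1, h2]
  · -- sigma-finite
    have : IsFiniteMeasure μ := ⟨by rw [hμ, hM]; exact ENNReal.ofReal_lt_top⟩
    infer_instance
  · -- positivity
    rw [pairing_val γ sg hγ1 (by positivity)]
    apply ENNReal.ofReal_pos.mpr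
    have h1 : 0 < (γ + sg) * (c ^ 2 / 2) := by positivity
    have h2 : 0 ≤ (1 - γ) * c := mul_nonneg (by linarith) hcpos.le
    linarith
  · rw [pairing_val γ sg hγ1 (by positivity)]
    exact ENNReal.ofReal_lt_top
  · -- supremum
    apply le_antisymm
    · refine iSup₂_le fun f hf => ?_
      obtain ⟨p, hp, rfl⟩ := hf
      obtain ⟨hp1, hp2, hp3, hp4⟩ := hp
      rw [pairing_val p.1 p.2 (Real.sqrt_le_one.mp hp4) (by linarith),
        pairing_val γ sg hγ1 (by positivity)]
      exact ENNReal.ofReal_le_ofReal (key_ineq γ p.1 p.2 hγ0 hγ1 hp1 hp2 hp3 hp4)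
    · exact le_biSup _ hgC

end AuxProof4

section AuxProof5

open Real MeasureTheory

lemma oneL_ne_zero (P : Measure OmegaInf) [IsProbabilityMeasure P] : oneL P ≠ 0 := by
  intro h
  have h1 : (oneL P : OmegaInf → ℝ) =ᵐ[P] Function.const OmegaInf (1:ℝ) :=
    AEEqFun.coeFn_const _ _
  have h0 : (oneL P : OmegaInf → ℝ) =ᵐ[P] (0 : OmegaInf → ℝ) := by
    rw [h]; exact AEEqFun.coeFn_zero
  have hfalse : ∀ᵐ (ω : OmegaInf) ∂P, False := by
    filter_upwards [h1, h0] with ω e1 e0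
    rw [e0] at e1
    norm_num [Function.const] at e1
  haveI : (ae P).NeBot := ae_neBot.mpr (IsProbabilityMeasure.ne_zero P)
  obtain ⟨ω, hω⟩ := hfalse.exists
  exact hω

lemma part3_lemma (P : Measure OmegaInf) [IsProbabilityMeasure P]
    (hPL : P ≪ LebInf) (hLP : LebInf ≪ P) :
    oneL P ∉ osp P (Cex P) := by
  rintro ⟨hmax, hcase⟩
  have honeC : oneL P ∈ Cex P :=
    ⟨(0, 0), ⟨le_refl 0, le_refl 0, by simp, by simp⟩, oneL_eq_elt P⟩
  rcases hcase with h0 | ⟨μ, hμP, hσ, hpos, hlt, hsup⟩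
  · rw [h0] at honeC
    exact oneL_ne_zero P (Set.mem_singleton_iff.mp honeC)
  · set S := ∫⁻ (ω : OmegaInf), ENNReal.ofReal (ω : ℝ) ∂μ with hSdef
    have hpair1 : pairing μ (oneL P) = μ Set.univ := by
      rw [oneL_eq_elt P, pairing_elt P μ hμP 0 0 (by norm_num) (by norm_num)]
      simp
    rcases eq_or_ne S ⊤ with hStop | hSfin
    · have hsq : Real.sqrt (1/4 : ℝ) = 1/2 := by
        rw [show (1/4:ℝ) = (1/2)^2 by norm_num, Real.sqrt_sq (by norm_num : (0:ℝ) ≤ 1/2)]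
      have hKq : ((1/4 : ℝ), (1/2 : ℝ)) ∈ Kset :=
        ⟨by norm_num, by norm_num, by rw [hsq], by rw [hsq]; norm_num⟩
      have hfC : elt P (1/4) (1/2) ∈ Cex P := ⟨(1/4, 1/2), hKq, rfl⟩
      have htop : pairing μ (elt P (1/4) (1/2)) = ⊤ := by
        rw [pairing_elt P μ hμP _ _ (by norm_num) (by norm_num), ← hSdef, hStop,
          ENNReal.mul_top (by norm_num : ENNReal.ofReal (1/4 + 1/2) ≠ 0)]
        exact add_top _
      have hle := le_biSup (fun f => pairing μ f) hfC
      rw [hsup] at hle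
      simp only [htop, top_le_iff] at hle
      rw [hle] at hlt
      exact lt_irrefl _ hlt
    · set mR := (μ Set.univ).toReal with hmRdef
      set sR := S.toReal with hsRdef
      have hμfin : μ Set.univ ≠ ⊤ := by rw [← hpair1]; exact hlt.ne
      have hmR : 0 < mR := ENNReal.toReal_pos (by rw [← hpair1]; exact hpos.ne') hμfin
      have hsRpos : 0 < sR := by
        rcases (lt_or_eq_of_le (ENNReal.toReal_nonneg : (0:ℝ) ≤ sR)) with h | h
        · exact h
        · exfalso
          have hS0 : S = 0 := by
            rcases ENNReal.toReal_eq_zero_iff S |>.mp h.symm with h' | h'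
            · exact h'
            · exact absurd h' hSfin
          rw [hSdef] at hS0
          have hae := (lintegral_eq_zero_iff measurable_subtype_coe.ennreal_ofReal).mp hS0
          have hfalse : ∀ᵐ (ω : OmegaInf) ∂μ, False := by
            filter_upwards [hae] with ω hω
            have : ENNReal.ofReal (ω : ℝ) ≠ 0 := (ENNReal.ofReal_pos.mpr ω.2).ne'
            exact this (by simpa using hω)
          rw [ae_iff] at hfalse
          simp only [not_false_eq_true, Set.setOf_true] at hfalse
          rw [hfalse, ENNReal.toReal_zero] at hmRdef
          linarith
      set t := min 1 (sR / (2 * mR)) with ht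
      have ht0 : 0 < t := lt_min one_pos (by positivity)
      have ht1 : t ≤ 1 := min_le_left _ _
      have htm : t * mR ≤ sR / 2 := by
        have hmin := min_le_right 1 (sR / (2 * mR))
        have h1 : t * mR ≤ (sR / (2 * mR)) * mR := mul_le_mul_of_nonneg_right hmin hmR.le
        have h2 : (sR / (2 * mR)) * mR = sR / 2 := by
          field_simp
        linarith
      have ht2 : t ^ 2 ≤ 1 := by nlinarith
      have hKt : ((t ^ 2, t) : ℝ × ℝ) ∈ Kset :=
        ⟨by positivity, ht0.le, by rw [Real.sqrt_sq ht0.le], by rw [Real.sqrt_sq ht0.le]; exact ht1⟩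
      have hfC : elt P (t ^ 2) t ∈ Cex P := ⟨(t ^ 2, t), hKt, rfl⟩
      have hle := le_biSup (fun f => pairing μ f) hfC
      rw [hsup, hpair1] at hle
      rw [pairing_elt P μ hμP (t ^ 2) t (by nlinarith) (by positivity), ← hSdef] at hle
      have hreal : (1 - t ^ 2) * mR + (t ^ 2 + t) * sR ≤ mR := by
        have hmono := ENNReal.toReal_mono hμfin hle
        rwa [ENNReal.toReal_add (ENNReal.mul_ne_top ENNReal.ofReal_ne_top hμfin)
            (ENNReal.mul_ne_top ENNReal.ofReal_ne_top hSfin),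
          ENNReal.toReal_mul, ENNReal.toReal_mul,
          ENNReal.toReal_ofReal (by linarith : (0:ℝ) ≤ 1 - t ^ 2),
          ENNReal.toReal_ofReal (by positivity : (0:ℝ) ≤ t ^ 2 + t), ← hmRdef, ← hsRdef] at hmono
      nlinarith [mul_le_mul_of_nonneg_left htm ht0.le, mul_pos ht0 hsRpos,
        mul_pos (mul_pos ht0 ht0) hsRpos]

end AuxProof5

/-- For `Ω = (0, ∞)`, `P` a probability equivalent to Lebesgue measure,
and `C = {1 - α + (α + β) ξ : (α, β) ∈ K}`, the set of outer support points of `C` equals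
`C^max \\ {1}`; that is, for every `γ ∈ (0, 1]` the element `g_γ = 1 - γ + (γ + √γ) ξ` is
an outer support point of `C`, while the constant `1` is not. -/
theorem statement16 (P : Measure OmegaInf) [IsProbabilityMeasure P]
    (hPL : P ≪ LebInf) (hLP : LebInf ≪ P) :
    osp P (Cex P) = maxSet P (Cex P) \ {oneL P} ∧
    (∀ γ ∈ Set.Ioc (0:ℝ) 1, elt P γ (Real.sqrt γ) ∈ osp P (Cex P)) ∧
    oneL P ∉ osp P (Cex P) := by
  have part2 := part2_lemma P hPL hLP
  have part3 := part3_lemma P hPL hLP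
  refine ⟨?_, part2, part3⟩
  ext g
  simp only [Set.mem_diff, Set.mem_singleton_iff]
  constructor
  · intro hg
    refine ⟨hg.1, fun he => ?_⟩
    apply part3
    rw [← he]
    exact hg
  · rintro ⟨hmax, hne⟩
    obtain ⟨p, hp, heq⟩ := hmax.1
    obtain ⟨hp1, hp2, hp3, hp4⟩ := hp
    subst heq
    have hC2 : elt P p.1 (Real.sqrt p.1) ∈ Cex P :=
      ⟨(p.1, Real.sqrt p.1), ⟨hp1, Real.sqrt_nonneg _, le_refl _, hp4⟩, rfl⟩
    have hle : elt P p.1 p.2 ≤ elt P p.1 (Real.sqrt p.1) :=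
      (elt_le_iff P hPL hLP _ _ _ _).mpr ⟨le_refl _, by linarith⟩
    have heq2 := hmax.2 _ hC2 hle
    have hb := (elt_inj P hPL hLP heq2).2
    have hp1pos : 0 < p.1 := by
      rcases eq_or_lt_of_le hp1 with h0 | h0
      · exfalso
        apply hne
        have h1 : p.1 = 0 := h0.symm
        have hb0 : p.2 = 0 := by rw [hb, h1, Real.sqrt_zero]
        rw [h1, hb0, ← oneL_eq_elt]
      · exact h0
    have hres := part2 p.1 ⟨hp1pos, Real.sqrt_le_one.mp hp4⟩
    rwa [← hb] at hres
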